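/- Every weight space of a simple weight A_k-module is one-dimensional over ℂ. -/

import Mathlib

noncomputable section

namespace BP

/-- The free `ℂ`-algebra on four generators `J, G⁺, G⁻, L`. -/
abbrev F : Type := FreeAlgebra ℂ (Fin 4)

def jF : F := FreeAlgebra.ι ℂ 0
def gpF : F := FreeAlgebra.ι ℂ 1
def gmF : F := FreeAlgebra.ι ℂ 2
def lF : F := FreeAlgebra.ι ℂ 3

/-- `f_k(J, L) = 3J² − (k+3)L − (1/8)(k+1)(2k+3)·1`, as an element of the free algebra. -/
def fF (k : ℂ) : F :=
  3 * jF ^ 2 - algebraMap ℂ F (k + 3) * lF - algebraMap ℂ F (1/8 * (k + 1) * (2*k + 3))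

/-- The defining relations of `A_k`: `L` is central, `[J,G⁺] = G⁺`, `[J,G⁻] = −G⁻`,
`[G⁺,G⁻] = f_k(J,L)`. -/
inductive Rel (k : ℂ) : F → F → Prop
  | lj : Rel k (lF * jF) (jF * lF)
  | lgp : Rel k (lF * gpF) (gpF * lF)
  | lgm : Rel k (lF * gmF) (gmF * lF)
  | jgp : Rel k (jF * gpF - gpF * jF) gpF
  | jgm : Rel k (jF * gmF - gmF * jF) (-gmF)
  | gpgm : Rel k (gpF * gmF - gmF * gpF) (fF k)

/-- The unital associative `ℂ`-algebra `A_k`: the quotient of the free algebra on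
`J, G⁺, G⁻, L` by the two-sided ideal generated by the defining relations. -/
def A (k : ℂ) : Type := RingQuot (Rel k)

instance (k : ℂ) : Ring (A k) := inferInstanceAs (Ring (RingQuot (Rel k)))
instance (k : ℂ) : Algebra ℂ (A k) := inferInstanceAs (Algebra ℂ (RingQuot (Rel k)))

/-- The quotient map `F →ₐ[ℂ] A_k`. -/
def mk (k : ℂ) : F →ₐ[ℂ] A k := RingQuot.mkAlgHom ℂ (Rel k)

/-- The generator `J` of `A_k`. -/
def J (k : ℂ) : A k := mk k jF
/-- The generator `G⁺` of `A_k`. -/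
def Gp (k : ℂ) : A k := mk k gpF
/-- The generator `G⁻` of `A_k`. -/
def Gm (k : ℂ) : A k := mk k gmF
/-- The generator `L` of `A_k`. -/
def L (k : ℂ) : A k := mk k lF

/-- The weight space of weight `(j, Δ)` in an `A_k`-module `M` (with a compatible
`ℂ`-vector space structure): the simultaneous eigenspace of `J` and `L` with
eigenvalues `j` and `Δ`. -/
def weightSpace (k : ℂ) {M : Type} [AddCommGroup M] [Module ℂ M] [Module (A k) M]
    [IsScalarTower ℂ (A k) M] (j Δ : ℂ) : Submodule ℂ M where
  carrier := {m | J k • m = j • m ∧ L k • m = Δ • m}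
  add_mem' := by
    rintro a b ⟨h1, h2⟩ ⟨h3, h4⟩
    constructor <;> simp only [smul_add, h1, h2, h3, h4]
  zero_mem' := by constructor <;> simp
  smul_mem' := by
    rintro c m ⟨h1, h2⟩
    constructor
    · rw [← smul_comm c (J k) m, h1, smul_smul, smul_smul, mul_comm]
    · rw [← smul_comm c (L k) m, h2, smul_smul, smul_smul, mul_comm]

/-- An `A_k`-module (with compatible `ℂ`-structure) is a *weight module* if it has a
`ℂ`-basis of weight vectors and all its weight spaces are finite-dimensional. -/
def IsWeightModule (k : ℂ) (M : Type) [AddCommGroup M] [Module ℂ M] [Module (A k) M]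
    [IsScalarTower ℂ (A k) M] : Prop :=
  (∃ (ι : Type) (b : Module.Basis ι ℂ M), ∀ i : ι, ∃ j Δ : ℂ, b i ∈ weightSpace k j Δ) ∧
  ∀ j Δ : ℂ, FiniteDimensional ℂ ↥(weightSpace k (M := M) j Δ)

section Aux

variable (k : ℂ) (M : Type) [AddCommGroup M] [Module ℂ M] [Module (A k) M]
  [IsScalarTower ℂ (A k) M]

/-- The action of `A k` on `M` as an algebra homomorphism into endomorphisms. -/
def act : A k →ₐ[ℂ] Module.End ℂ M := Algebra.lsmul ℂ ℂ M

@[simp] lemma act_apply (a : A k) (x : M) : act k M a x = a • x := rfl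

def qE : Module.End ℂ M := act k M (J k)
def pE : Module.End ℂ M := act k M (Gp k)
def mE : Module.End ℂ M := act k M (Gm k)
def lE : Module.End ℂ M := act k M (L k)

/-- the constant in `f_k`. -/
def cc (k : ℂ) : ℂ := 1/8 * (k + 1) * (2*k + 3)

variable {k}

lemma Arel_lj : L k * J k = J k * L k := by
  rw [L, J, ← map_mul, ← map_mul]; exact RingQuot.mkAlgHom_rel ℂ Rel.lj

lemma Arel_lgp : L k * Gp k = Gp k * L k := by
  rw [L, Gp, ← map_mul, ← map_mul]; exact RingQuot.mkAlgHom_rel ℂ Rel.lgp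

lemma Arel_lgm : L k * Gm k = Gm k * L k := by
  rw [L, Gm, ← map_mul, ← map_mul]; exact RingQuot.mkAlgHom_rel ℂ Rel.lgm

lemma Arel_jgp : J k * Gp k - Gp k * J k = Gp k := by
  rw [J, Gp, ← map_mul, ← map_mul, ← map_sub]; exact RingQuot.mkAlgHom_rel ℂ Rel.jgp

lemma Arel_jgm : J k * Gm k - Gm k * J k = -Gm k := by
  rw [J, Gm, ← map_mul, ← map_mul, ← map_sub, ← map_neg]
  exact RingQuot.mkAlgHom_rel ℂ Rel.jgm

lemma Arel_gpgm : Gp k * Gm k - Gm k * Gp k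
    = 3 * (J k)^2 - algebraMap ℂ (A k) (k+3) * L k - algebraMap ℂ (A k) (cc k) := by
  have h : mk k (gpF * gmF - gmF * gpF) = mk k (fF k) := RingQuot.mkAlgHom_rel ℂ (Rel.gpgm (k := k))
  rw [Gp, Gm, J, L, ← map_mul, ← map_mul, ← map_sub]
  refine h.trans ?_
  rw [fF, cc]
  simp only [map_sub, map_mul, map_pow, map_ofNat, AlgHom.commutes]

lemma Erel_qp : qE k M * pE k M = pE k M * qE k M + pE k M := by
  have h := congrArg (act k M) (Arel_jgp (k := k))
  rw [map_sub, map_mul, map_mul] at h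
  rw [← sub_eq_iff_eq_add']
  exact h

lemma Erel_qm : qE k M * mE k M = mE k M * qE k M - mE k M := by
  have h := congrArg (act k M) (Arel_jgm (k := k))
  rw [map_sub, map_mul, map_mul, map_neg] at h
  replace h : qE k M * mE k M - mE k M * qE k M = -(mE k M) := h
  rw [sub_eq_iff_eq_add] at h
  rw [h]; abel

lemma Erel_lq : lE k M * qE k M = qE k M * lE k M := by
  have h := congrArg (act k M) (Arel_lj (k := k))
  rwa [map_mul, map_mul] at h

lemma Erel_lp : lE k M * pE k M = pE k M * lE k M := by
  have h := congrArg (act k M) (Arel_lgp (k := k))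
  rwa [map_mul, map_mul] at h

lemma Erel_lm : lE k M * mE k M = mE k M * lE k M := by
  have h := congrArg (act k M) (Arel_lgm (k := k))
  rwa [map_mul, map_mul] at h

variable (k)

/-- the central-ish coefficient operator `(k+3) L + cc k`. -/
def γE : Module.End ℂ M := (k+3) • lE k M + cc k • 1

/-- the image of `f_k` as an operator. -/
def fE : Module.End ℂ M := (3:ℂ) • (qE k M * qE k M) - γE k M

variable {k}

lemma Erel_pm : pE k M * mE k M = mE k M * pE k M + fE k M := by
  have h := congrArg (act k M) (Arel_gpgm (k := k))
  simp only [map_sub, map_mul, map_pow] at h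
  replace h : pE k M * mE k M - mE k M * pE k M =
      act k M 3 * qE k M ^ 2 - act k M (algebraMap ℂ (A k) (k+3)) * lE k M
        - act k M (algebraMap ℂ (A k) (cc k)) := h
  rw [AlgHom.commutes, AlgHom.commutes, map_ofNat] at h
  rw [← sub_eq_iff_eq_add', h, fE, γE]
  simp only [Algebra.smul_def, map_ofNat, mul_one, pow_two]
  abel

lemma γ_q : γE k M * qE k M = qE k M * γE k M := by
  simp only [γE, add_mul, mul_add, smul_mul_assoc, mul_smul_comm, Erel_lq, one_mul, mul_one]

lemma γ_p : γE k M * pE k M = pE k M * γE k M := by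
  simp only [γE, add_mul, mul_add, smul_mul_assoc, mul_smul_comm, Erel_lp, one_mul, mul_one]

lemma γ_m : γE k M * mE k M = mE k M * γE k M := by
  simp only [γE, add_mul, mul_add, smul_mul_assoc, mul_smul_comm, Erel_lm, one_mul, mul_one]

-- "move" lemmas
lemma mv_qp (X : Module.End ℂ M) :
    qE k M * (pE k M * X) = pE k M * (qE k M * X) + pE k M * X := by
  rw [← mul_assoc, Erel_qp, add_mul, mul_assoc]

lemma mv_qm (X : Module.End ℂ M) :
    qE k M * (mE k M * X) = mE k M * (qE k M * X) - mE k M * X := by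
  rw [← mul_assoc, Erel_qm, sub_mul, mul_assoc]

lemma mv_γp (X : Module.End ℂ M) :
    γE k M * (pE k M * X) = pE k M * (γE k M * X) := by
  rw [← mul_assoc, γ_p, mul_assoc]

lemma mv_γm (X : Module.End ℂ M) :
    γE k M * (mE k M * X) = mE k M * (γE k M * X) := by
  rw [← mul_assoc, γ_m, mul_assoc]

lemma mv_γq (X : Module.End ℂ M) :
    γE k M * (qE k M * X) = qE k M * (γE k M * X) := by
  rw [← mul_assoc, γ_q, mul_assoc]

variable (k)

/-- The polynomial part of the Casimir operator. -/
def uE : Module.End ℂ M :=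
  qE k M * (qE k M * qE k M) + (3/2 : ℂ) • (qE k M * qE k M) + (1/2 : ℂ) • qE k M
    - γE k M * qE k M

/-- The Casimir operator. -/
def ΩE : Module.End ℂ M := mE k M * pE k M + uE k M

variable {k}

lemma keyP : uE k M * pE k M = pE k M * uE k M + fE k M * pE k M := by
  simp only [uE, fE, add_mul, sub_mul, smul_mul_assoc, mul_assoc, Erel_qp, mv_qp, mv_γp, γ_p,
    mul_add, mul_sub, mul_smul_comm, smul_add, smul_sub, smul_smul]
  module

lemma keyM : uE k M * mE k M = mE k M * uE k M - mE k M * fE k M := by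
  simp only [uE, fE, add_mul, sub_mul, smul_mul_assoc, mul_assoc, Erel_qm, mv_qm, mv_γm, γ_m,
    mul_add, mul_sub, mul_smul_comm, smul_add, smul_sub, smul_smul]
  module

lemma Ω_p : ΩE k M * pE k M = pE k M * ΩE k M := by
  have h : pE k M * (mE k M * pE k M) = mE k M * (pE k M * pE k M) + fE k M * pE k M := by
    rw [← mul_assoc, Erel_pm, add_mul, mul_assoc]
  rw [ΩE, add_mul, mul_add, keyP, h, mul_assoc]
  abel1

lemma Ω_m : ΩE k M * mE k M = mE k M * ΩE k M := by
  rw [ΩE, add_mul, mul_add, keyM, mul_assoc, Erel_pm, mul_add]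
  abel1

lemma Ω_q : ΩE k M * qE k M = qE k M * ΩE k M := by
  rw [ΩE, add_mul, mul_add]
  have h1 : mE k M * pE k M * qE k M = qE k M * (mE k M * pE k M) := by
    rw [mul_assoc, mv_qm, Erel_qp, mul_add]
    abel
  have h2 : uE k M * qE k M = qE k M * uE k M := by
    simp only [uE, add_mul, sub_mul, smul_mul_assoc, mul_assoc, mul_add, mul_sub,
      mul_smul_comm, mv_γq]
  rw [h1, h2]

lemma Ω_l : ΩE k M * lE k M = lE k M * ΩE k M := by
  have hlγ : lE k M * γE k M = γE k M * lE k M := by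
    simp only [γE, mul_add, add_mul, mul_smul_comm, smul_mul_assoc, mul_one, one_mul]
  have mvlm : ∀ X : Module.End ℂ M, lE k M * (mE k M * X) = mE k M * (lE k M * X) :=
    fun X => by rw [← mul_assoc, Erel_lm, mul_assoc]
  have mvlq : ∀ X : Module.End ℂ M, lE k M * (qE k M * X) = qE k M * (lE k M * X) :=
    fun X => by rw [← mul_assoc, Erel_lq, mul_assoc]
  rw [ΩE, add_mul, mul_add]
  have h1 : mE k M * pE k M * lE k M = lE k M * (mE k M * pE k M) := by
    rw [mul_assoc, ← Erel_lp, ← mul_assoc, ← Erel_lm, mul_assoc]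
  have mvγl : ∀ X : Module.End ℂ M, lE k M * (γE k M * X) = γE k M * (lE k M * X) :=
    fun X => by rw [← mul_assoc, hlγ, mul_assoc]
  have h2 : uE k M * lE k M = lE k M * uE k M := by
    simp only [uE, add_mul, sub_mul, smul_mul_assoc, mul_assoc, mul_add, mul_sub,
      mul_smul_comm, mvlq, mvlm, mvγl, Erel_lq]
  rw [h1, h2]

lemma Ω_comm (a : A k) : ΩE k M * act k M a = act k M a * ΩE k M := by
  obtain ⟨y, rfl⟩ : ∃ y, mk k y = a := RingQuot.mkAlgHom_surjective ℂ (Rel k) a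
  induction y using FreeAlgebra.induction with
  | grade0 r =>
    rw [show (mk k (algebraMap ℂ F r)) = algebraMap ℂ (A k) r from
      AlgHom.commutes _ r, AlgHom.commutes]
    rw [Algebra.commutes]
  | grade1 i =>
    fin_cases i
    · exact Ω_q (k := k) M
    · exact Ω_p (k := k) M
    · exact Ω_m (k := k) M
    · exact Ω_l (k := k) M
  | mul a b ha hb => rw [map_mul, map_mul, ← mul_assoc, ha, mul_assoc, hb, ← mul_assoc]
  | add a b ha hb => rw [map_add, map_add, mul_add, add_mul, ha, hb]
variable {M}

lemma mem_ws {j Δ : ℂ} {x : M} :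
    x ∈ weightSpace k (M := M) j Δ ↔ qE k M x = j • x ∧ lE k M x = Δ • x := Iff.rfl

lemma ws_p {j Δ : ℂ} {x : M} (h : x ∈ weightSpace k (M := M) j Δ) :
    pE k M x ∈ weightSpace k (M := M) (j+1) Δ := by
  obtain ⟨h1, h2⟩ := mem_ws.mp h
  refine mem_ws.mpr ⟨?_, ?_⟩
  · calc qE k M (pE k M x) = (qE k M * pE k M) x := rfl
    _ = (pE k M * qE k M + pE k M) x := by rw [Erel_qp]
    _ = pE k M (qE k M x) + pE k M x := rfl
    _ = (j+1) • pE k M x := by rw [h1, map_smul, add_smul, one_smul]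
  · calc lE k M (pE k M x) = (lE k M * pE k M) x := rfl
    _ = (pE k M * lE k M) x := by rw [Erel_lp]
    _ = pE k M (lE k M x) := rfl
    _ = Δ • pE k M x := by rw [h2, map_smul]

lemma ws_m {j Δ : ℂ} {x : M} (h : x ∈ weightSpace k (M := M) j Δ) :
    mE k M x ∈ weightSpace k (M := M) (j-1) Δ := by
  obtain ⟨h1, h2⟩ := mem_ws.mp h
  refine mem_ws.mpr ⟨?_, ?_⟩
  · calc qE k M (mE k M x) = (qE k M * mE k M) x := rfl
    _ = (mE k M * qE k M - mE k M) x := by rw [Erel_qm]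
    _ = mE k M (qE k M x) - mE k M x := rfl
    _ = (j-1) • mE k M x := by rw [h1, map_smul, sub_smul, one_smul]
  · calc lE k M (mE k M x) = (lE k M * mE k M) x := rfl
    _ = (mE k M * lE k M) x := by rw [Erel_lm]
    _ = mE k M (lE k M x) := rfl
    _ = Δ • mE k M x := by rw [h2, map_smul]

lemma ws_ppow {j Δ : ℂ} {x : M} (h : x ∈ weightSpace k (M := M) j Δ) (n : ℕ) :
    ((pE k M)^n) x ∈ weightSpace k (M := M) (j + n) Δ := by
  induction n with
  | zero => simpa using h
  | succ n ih =>
    have h2 := ws_p ih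
    have e : ((pE k M)^(n+1)) x = pE k M (((pE k M)^n) x) := by rw [pow_succ']; rfl
    rw [e]
    convert h2 using 2
    push_cast; ring

lemma ws_mpow {j Δ : ℂ} {x : M} (h : x ∈ weightSpace k (M := M) j Δ) (n : ℕ) :
    ((mE k M)^n) x ∈ weightSpace k (M := M) (j - n) Δ := by
  induction n with
  | zero => simpa using h
  | succ n ih =>
    have h2 := ws_m ih
    have e : ((mE k M)^(n+1)) x = mE k M (((mE k M)^n) x) := by rw [pow_succ']; rfl
    rw [e]
    convert h2 using 2
    push_cast; ring

/-- the scalar by which the polynomial part of the Casimir acts on weight `(j,Δ)`. -/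
def uu (k j Δ : ℂ) : ℂ := j*(j*j) + (3/2)*(j*j) + (1/2)*j - ((k+3)*Δ + cc k)*j

/-- the scalar by which `f_k` acts on weight `(j,Δ)`. -/
def ff (k j Δ : ℂ) : ℂ := 3*(j*j) - ((k+3)*Δ + cc k)

lemma γ_apply {j Δ : ℂ} {x : M} (h : x ∈ weightSpace k (M := M) j Δ) :
    γE k M x = ((k+3)*Δ + cc k) • x := by
  obtain ⟨h1, h2⟩ := mem_ws.mp h
  simp only [γE, LinearMap.add_apply, LinearMap.smul_apply, Module.End.one_apply, h2,
    smul_smul, add_smul]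
  module

lemma u_apply {j Δ : ℂ} {x : M} (h : x ∈ weightSpace k (M := M) j Δ) :
    uE k M x = uu k j Δ • x := by
  obtain ⟨h1, h2⟩ := mem_ws.mp h
  have hγ := γ_apply h
  simp only [uE, uu, LinearMap.add_apply, LinearMap.sub_apply, LinearMap.smul_apply,
    Module.End.mul_apply, h1, map_smul, hγ, smul_smul]
  module

lemma f_apply {j Δ : ℂ} {x : M} (h : x ∈ weightSpace k (M := M) j Δ) :
    fE k M x = ff k j Δ • x := by
  obtain ⟨h1, h2⟩ := mem_ws.mp h
  have hγ := γ_apply h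
  simp only [fE, ff, LinearMap.sub_apply, LinearMap.smul_apply, Module.End.mul_apply, h1,
    map_smul, hγ, smul_smul]
  module

lemma mp_apply {c₀ : ℂ} (hΩ : ∀ y : M, ΩE k M y = c₀ • y) {j Δ : ℂ} {x : M}
    (h : x ∈ weightSpace k (M := M) j Δ) :
    (mE k M * pE k M) x = (c₀ - uu k j Δ) • x := by
  have h0 : ΩE k M x = (mE k M * pE k M) x + uE k M x := rfl
  have h1 : (mE k M * pE k M) x = ΩE k M x - uE k M x := eq_sub_of_add_eq h0.symm
  rw [h1, hΩ x, u_apply h, ← sub_smul]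

lemma pm_apply {c₀ : ℂ} (hΩ : ∀ y : M, ΩE k M y = c₀ • y) {j Δ : ℂ} {x : M}
    (h : x ∈ weightSpace k (M := M) j Δ) :
    (pE k M * mE k M) x = (c₀ - uu k j Δ + ff k j Δ) • x := by
  rw [Erel_pm]
  have : (mE k M * pE k M + fE k M) x = (mE k M * pE k M) x + fE k M x := rfl
  rw [this, mp_apply hΩ h, f_apply h, add_smul]
variable (k M)

/-- the generators as operators, indexed by `Fin 4`. -/
def gen : Fin 4 → Module.End ℂ M := ![qE k M, pE k M, mE k M, lE k M]

/-- the operator given by a word in the generators. -/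
def wd (w : List (Fin 4)) : Module.End ℂ M := (w.map (gen k M)).prod

/-- the degree of each generator. -/
def degi : Fin 4 → ℤ := ![0, 1, -1, 0]

/-- the degree of a word. -/
def degw (w : List (Fin 4)) : ℤ := (w.map degi).sum

/-- normal form operator for degree `n`. -/
def nf (n : ℤ) : Module.End ℂ M := if 0 ≤ n then pE k M ^ n.toNat else mE k M ^ (-n).toNat

variable {k M}

lemma wd_nil : wd k M [] = 1 := rfl
lemma wd_cons (a : Fin 4) (w : List (Fin 4)) : wd k M (a :: w) = gen k M a * wd k M w := by
  simp [wd]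

lemma degw_nil : degw ([] : List (Fin 4)) = 0 := rfl
lemma degw_cons (a : Fin 4) (w : List (Fin 4)) : degw (a :: w) = degi a + degw w := by
  simp [degw]

lemma gen_ws (a : Fin 4) {t Δ : ℂ} {x : M} (h : x ∈ weightSpace k (M := M) t Δ) :
    gen k M a x ∈ weightSpace k (M := M) (t + degi a) Δ := by
  fin_cases a
  · show qE k M x ∈ weightSpace k (M := M) (t + ((0:ℤ):ℂ)) Δ
    rw [show (t + ((0:ℤ):ℂ)) = t by push_cast; ring, (mem_ws.mp h).1]
    exact Submodule.smul_mem _ _ h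
  · show pE k M x ∈ weightSpace k (M := M) (t + ((1:ℤ):ℂ)) Δ
    rw [show (t + ((1:ℤ):ℂ)) = t + 1 by push_cast; ring]; exact ws_p h
  · show mE k M x ∈ weightSpace k (M := M) (t + ((-1:ℤ):ℂ)) Δ
    rw [show (t + ((-1:ℤ):ℂ)) = t - 1 by push_cast; ring]; exact ws_m h
  · show lE k M x ∈ weightSpace k (M := M) (t + ((0:ℤ):ℂ)) Δ
    rw [show (t + ((0:ℤ):ℂ)) = t by push_cast; ring, (mem_ws.mp h).2]
    exact Submodule.smul_mem _ _ h

lemma wd_ws {t Δ : ℂ} {x : M} (h : x ∈ weightSpace k (M := M) t Δ) :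
    ∀ w : List (Fin 4), wd k M w x ∈ weightSpace k (M := M) (t + degw w) Δ := by
  intro w; induction w with
  | nil => simpa [wd_nil, degw_nil] using h
  | cons a w ih =>
    have e : wd k M (a :: w) x = gen k M a (wd k M w x) := by rw [wd_cons]; rfl
    rw [e]
    have h2 := gen_ws a ih
    convert h2 using 2
    rw [degw_cons]; push_cast; ring

lemma nf_ws {t Δ : ℂ} {x : M} (h : x ∈ weightSpace k (M := M) t Δ) (n : ℤ) :
    nf k M n x ∈ weightSpace k (M := M) (t + n) Δ := by
  rw [nf]; split_ifs with hn
  · have h2 := ws_ppow h n.toNat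
    convert h2 using 2
    congr 1
    exact_mod_cast (congrArg ((Int.cast : ℤ → ℂ)) (Int.toNat_of_nonneg hn)).symm
  · push_neg at hn
    have h2 := ws_mpow h (-n).toNat
    convert h2 using 2
    have h3 : (((-n).toNat : ℤ)) = -n := Int.toNat_of_nonneg (by omega)
    rw [show (((-n).toNat : ℕ) : ℂ) = -(n:ℂ) from by exact_mod_cast congrArg ((Int.cast : ℤ → ℂ)) h3]
    ring

lemma p_nf {c₀ : ℂ} (hΩ : ∀ y : M, ΩE k M y = c₀ • y) {t Δ : ℂ} {x : M}
    (h : x ∈ weightSpace k (M := M) t Δ) (n : ℤ) :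
    ∃ z : ℂ, pE k M (nf k M n x) = z • nf k M (n + 1) x := by
  by_cases hn : 0 ≤ n
  · refine ⟨1, ?_⟩
    rw [nf, if_pos hn, nf, if_pos (by omega : (0:ℤ) ≤ n + 1), one_smul,
      show (n+1).toNat = n.toNat + 1 from by omega, pow_succ']
    rfl
  · push_neg at hn
    have hsx : ((mE k M)^(-(n+1)).toNat) x
        ∈ weightSpace k (M := M) (t - (-(n+1)).toNat) Δ := ws_mpow h _
    refine ⟨c₀ - uu k (t - (-(n+1)).toNat) Δ + ff k (t - (-(n+1)).toNat) Δ, ?_⟩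
    have e1 : nf k M n x = mE k M (((mE k M)^(-(n+1)).toNat) x) := by
      rw [nf, if_neg (by omega), show (-n).toNat = (-(n+1)).toNat + 1 from by omega, pow_succ']
      rfl
    have e2 : nf k M (n + 1) x = ((mE k M)^(-(n+1)).toNat) x := by
      rw [nf]; split_ifs with h1
      · have hz : n + 1 = 0 := by omega
        rw [hz]; norm_num
      · rfl
    rw [e1, e2]
    have e3 : pE k M (mE k M (((mE k M)^(-(n+1)).toNat) x))
        = (pE k M * mE k M) (((mE k M)^(-(n+1)).toNat) x) := rfl
    rw [e3, pm_apply hΩ hsx]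

lemma m_nf {c₀ : ℂ} (hΩ : ∀ y : M, ΩE k M y = c₀ • y) {t Δ : ℂ} {x : M}
    (h : x ∈ weightSpace k (M := M) t Δ) (n : ℤ) :
    ∃ z : ℂ, mE k M (nf k M n x) = z • nf k M (n - 1) x := by
  by_cases hn : 0 < n
  · have hsx : ((pE k M)^(n-1).toNat) x
        ∈ weightSpace k (M := M) (t + (n-1).toNat) Δ := ws_ppow h _
    refine ⟨c₀ - uu k (t + (n-1).toNat) Δ, ?_⟩
    have e1 : nf k M n x = pE k M (((pE k M)^(n-1).toNat) x) := by
      rw [nf, if_pos (by omega), show n.toNat = (n-1).toNat + 1 from by omega, pow_succ']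
      rfl
    have e2 : nf k M (n - 1) x = ((pE k M)^(n-1).toNat) x := by
      rw [nf, if_pos (by omega)]
    rw [e1, e2]
    have e3 : mE k M (pE k M (((pE k M)^(n-1).toNat) x))
        = (mE k M * pE k M) (((pE k M)^(n-1).toNat) x) := rfl
    rw [e3, mp_apply hΩ hsx]
  · push_neg at hn
    refine ⟨1, ?_⟩
    have e1 : nf k M n x = ((mE k M)^(-n).toNat) x := by
      rw [nf]; split_ifs with h1
      · have hz : n = 0 := by omega
        rw [hz]; norm_num
      · rfl
    rw [e1, nf, if_neg (by omega), one_smul,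
      show (-(n-1)).toNat = (-n).toNat + 1 from by omega, pow_succ']
    rfl

lemma gen_nf {c₀ : ℂ} (hΩ : ∀ y : M, ΩE k M y = c₀ • y) {t Δ : ℂ} {x : M}
    (h : x ∈ weightSpace k (M := M) t Δ) (a : Fin 4) (n : ℤ) :
    ∃ z : ℂ, gen k M a (nf k M n x) = z • nf k M (n + degi a) x := by
  fin_cases a
  · refine ⟨t + n, ?_⟩
    show qE k M (nf k M n x) = _ • nf k M (n + (0:ℤ)) x
    rw [add_zero, (mem_ws.mp (nf_ws h n)).1]
  · show ∃ z, pE k M (nf k M n x) = z • nf k M (n + (1:ℤ)) x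
    exact p_nf hΩ h n
  · show ∃ z, mE k M (nf k M n x) = z • nf k M (n + (-1:ℤ)) x
    rw [show n + (-1:ℤ) = n - 1 from by ring]
    exact m_nf hΩ h n
  · refine ⟨Δ, ?_⟩
    show lE k M (nf k M n x) = _ • nf k M (n + (0:ℤ)) x
    rw [add_zero, (mem_ws.mp (nf_ws h n)).2]

lemma word_scalar {c₀ : ℂ} (hΩ : ∀ y : M, ΩE k M y = c₀ • y) {t Δ : ℂ} {x : M}
    (h : x ∈ weightSpace k (M := M) t Δ) (w : List (Fin 4)) :
    ∃ z : ℂ, wd k M w x = z • nf k M (degw w) x := by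
  induction w with
  | nil => exact ⟨1, by rw [wd_nil, degw_nil, nf]; simp⟩
  | cons a w ih =>
    obtain ⟨z, hz⟩ := ih
    obtain ⟨z', hz'⟩ := gen_nf hΩ h a (degw w)
    refine ⟨z * z', ?_⟩
    have e : wd k M (a :: w) x = gen k M a (wd k M w x) := by rw [wd_cons]; rfl
    rw [e, hz, map_smul, hz', smul_smul, degw_cons, add_comm (degi a) (degw w)]
variable (k M)

/-- The eigenspace of the Casimir operator, as an `A k`-submodule. -/
def casimirSub (c₀ : ℂ) : Submodule (A k) M where
  carrier := {x | ΩE k M x = c₀ • x}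
  add_mem' := by
    intro a b ha hb
    simp only [Set.mem_setOf_eq] at *
    rw [map_add, ha, hb, smul_add]
  zero_mem' := by simp
  smul_mem' := by
    intro a x hx
    simp only [Set.mem_setOf_eq] at *
    have e : ΩE k M (a • x) = (ΩE k M * act k M a) x := rfl
    rw [e, Ω_comm, show (act k M a * ΩE k M) x = act k M a (ΩE k M x) from rfl, hx, map_smul]
    rfl

variable {k M}

lemma act_word_span (w₀ : M) :
    ∀ y : F, ∀ w : List (Fin 4),
      act k M (mk k y) (wd k M w w₀) ∈
        Submodule.span ℂ (Set.range fun w : List (Fin 4) => wd k M w w₀) := by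
  intro y
  induction y using FreeAlgebra.induction with
  | grade0 r =>
    intro w
    have e : act k M (mk k (algebraMap ℂ F r)) (wd k M w w₀) = r • wd k M w w₀ := by
      have h1 : mk k (algebraMap ℂ F r) = algebraMap ℂ (A k) r := (mk k).commutes r
      rw [h1, (act k M).commutes r]
      rfl
    rw [e]
    exact Submodule.smul_mem _ _ (Submodule.subset_span ⟨w, rfl⟩)
  | grade1 i =>
    intro w
    have e : act k M (mk k (FreeAlgebra.ι ℂ i)) (wd k M w w₀) = wd k M (i :: w) w₀ := by
      rw [wd_cons]
      fin_cases i <;> rfl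
    rw [e]
    exact Submodule.subset_span ⟨_, rfl⟩
  | mul a b ha hb =>
    intro w
    have e : act k M (mk k (a * b)) (wd k M w w₀)
        = act k M (mk k a) (act k M (mk k b) (wd k M w w₀)) := by
      rw [map_mul, map_mul]; rfl
    rw [e]
    have hmap : Submodule.map (act k M (mk k a))
        (Submodule.span ℂ (Set.range fun w : List (Fin 4) => wd k M w w₀))
        ≤ Submodule.span ℂ (Set.range fun w : List (Fin 4) => wd k M w w₀) := by
      rw [Submodule.map_span]
      apply Submodule.span_le.mpr
      rintro _ ⟨_, ⟨w', rfl⟩, rfl⟩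
      exact ha w'
    exact hmap ⟨_, hb w, rfl⟩
  | add a b ha hb =>
    intro w
    have e : act k M (mk k (a + b)) (wd k M w w₀)
        = act k M (mk k a) (wd k M w w₀) + act k M (mk k b) (wd k M w w₀) := by
      rw [map_add, map_add]; rfl
    rw [e]
    exact Submodule.add_mem _ (ha w) (hb w)

lemma act_span (w₀ : M) (a : A k) :
    a • w₀ ∈ Submodule.span ℂ (Set.range fun w : List (Fin 4) => wd k M w w₀) := by
  obtain ⟨y, rfl⟩ := RingQuot.mkAlgHom_surjective ℂ (Rel k) a
  have h := act_word_span (k := k) w₀ y []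
  rw [wd_nil] at h
  exact h

end Aux

/-- every weight space of a simple weight `A_k`-module is
one-dimensional over `ℂ`. -/
theorem weightSpace_dim_one (k : ℂ) (M : Type) [AddCommGroup M] [Module ℂ M]
    [Module (A k) M] [IsScalarTower ℂ (A k) M]
    (hsimple : IsSimpleModule (A k) M) (hweight : IsWeightModule k M)
    (j Δ : ℂ) (hne : weightSpace k (M := M) j Δ ≠ ⊥) :
    Module.finrank ℂ ↥(weightSpace k (M := M) j Δ) = 1 := by
  classical
  haveI : FiniteDimensional ℂ ↥(weightSpace k (M := M) j Δ) := hweight.2 j Δ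
  haveI : Nontrivial ↥(weightSpace k (M := M) j Δ) :=
    Submodule.nontrivial_iff_ne_bot.mpr hne
  have hstab : ∀ x ∈ weightSpace k (M := M) j Δ, ΩE k M x ∈ weightSpace k (M := M) j Δ := by
    intro x hx
    obtain ⟨h1, h2⟩ := mem_ws.mp hx
    refine mem_ws.mpr ⟨?_, ?_⟩
    · calc qE k M (ΩE k M x) = (qE k M * ΩE k M) x := rfl
      _ = (ΩE k M * qE k M) x := by rw [Ω_q]
      _ = ΩE k M (qE k M x) := rfl
      _ = j • ΩE k M x := by rw [h1, map_smul]
    · calc lE k M (ΩE k M x) = (lE k M * ΩE k M) x := rfl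
      _ = (ΩE k M * lE k M) x := by rw [Ω_l]
      _ = ΩE k M (lE k M x) := rfl
      _ = Δ • ΩE k M x := by rw [h2, map_smul]
  obtain ⟨c₀, hc₀⟩ := Module.End.exists_eigenvalue ((ΩE k M).restrict hstab)
  obtain ⟨w, hw⟩ := hc₀.exists_hasEigenvector
  set w₀ : M := (w : M) with hw₀def
  have hw₀W : w₀ ∈ weightSpace k (M := M) j Δ := w.2
  have hw₀ne : w₀ ≠ 0 := fun hz => hw.2 (Subtype.ext hz)
  have hΩw₀ : ΩE k M w₀ = c₀ • w₀ := by
    have h1 := Module.End.mem_eigenspace_iff.mp hw.1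
    have h2 := congrArg (Subtype.val) h1
    simpa [LinearMap.restrict_coe_apply] using h2
  have hΩ : ∀ y : M, ΩE k M y = c₀ • y := by
    have hNtop : casimirSub k M c₀ = ⊤ := by
      rcases eq_bot_or_eq_top (casimirSub k M c₀) with hb | ht
      · exfalso
        apply hw₀ne
        have hmem : w₀ ∈ casimirSub k M c₀ := hΩw₀
        rw [hb] at hmem
        exact hmem
      · exact ht
    intro y
    have : y ∈ casimirSub k M c₀ := by rw [hNtop]; trivial
    exact this
  have hspan : Submodule.span (A k) {w₀} = ⊤ := by
    rcases eq_bot_or_eq_top (Submodule.span (A k) {w₀}) with hb | ht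
    · exfalso
      apply hw₀ne
      have hmem : w₀ ∈ Submodule.span (A k) {w₀} := Submodule.mem_span_singleton_self w₀
      rw [hb] at hmem
      exact (Submodule.mem_bot _).mp hmem
    · exact ht
  have key : ∀ x ∈ weightSpace k (M := M) j Δ, ∃ z : ℂ, x = z • w₀ := by
    intro x hx
    obtain ⟨a, ha⟩ : ∃ a : A k, a • w₀ = x :=
      Submodule.mem_span_singleton.mp (by rw [hspan]; trivial)
    have hx_span : x ∈ Submodule.span ℂ (Set.range fun w : List (Fin 4) => wd k M w w₀) := by
      rw [← ha]; exact act_span w₀ a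
    have hsub : Submodule.span ℂ (Set.range fun w : List (Fin 4) => wd k M w w₀)
        ≤ (ℂ ∙ w₀) ⊔ (⨆ (t : ℂ) (_ : t ≠ j), Module.End.eigenspace (qE k M) t) := by
      apply Submodule.span_le.mpr
      rintro _ ⟨w', rfl⟩
      dsimp only
      by_cases hd : degw w' = 0
      · obtain ⟨z, hz⟩ := word_scalar hΩ hw₀W w'
        rw [hz, hd]
        have e : nf k M (0:ℤ) w₀ = w₀ := by
          rw [nf, if_pos le_rfl]
          norm_num
        rw [e]
        exact Submodule.mem_sup_left
          (Submodule.smul_mem _ _ (Submodule.mem_span_singleton_self w₀))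
      · apply Submodule.mem_sup_right
        have hmem := wd_ws hw₀W w'
        have heig : wd k M w' w₀ ∈ Module.End.eigenspace (qE k M) (j + degw w') :=
          Module.End.mem_eigenspace_iff.mpr (mem_ws.mp hmem).1
        have hne' : j + (degw w' : ℂ) ≠ j := by
          intro hc
          apply hd
          have h0 : (degw w' : ℂ) = 0 := by
            have := congrArg (fun s => s - j) hc
            simpa using this
          exact_mod_cast h0
        exact Submodule.mem_iSup_of_mem (j + (degw w' : ℂ))
          (Submodule.mem_iSup_of_mem hne' heig)
    obtain ⟨y, hy, z, hz, hyz⟩ := Submodule.mem_sup.mp (hsub hx_span)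
    obtain ⟨c, rfl⟩ := Submodule.mem_span_singleton.mp hy
    refine ⟨c, ?_⟩
    have hzj : z ∈ Module.End.eigenspace (qE k M) j := by
      have hxj : x ∈ Module.End.eigenspace (qE k M) j :=
        Module.End.mem_eigenspace_iff.mpr (mem_ws.mp hx).1
      have hwj : c • w₀ ∈ Module.End.eigenspace (qE k M) j :=
        Submodule.smul_mem _ _ (Module.End.mem_eigenspace_iff.mpr (mem_ws.mp hw₀W).1)
      have e : z = x - c • w₀ := by rw [← hyz]; abel
      rw [e]
      exact Submodule.sub_mem _ hxj hwj
    have hz0 : z = 0 :=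
      Submodule.disjoint_def.mp (Module.End.eigenspaces_iSupIndep (qE k M) j) z hzj hz
    rw [hz0, add_zero] at hyz
    exact hyz.symm
  have hWeq : weightSpace k (M := M) j Δ = ℂ ∙ w₀ := by
    apply le_antisymm
    · intro x hx
      obtain ⟨z, hz⟩ := key x hx
      rw [hz]
      exact Submodule.smul_mem _ _ (Submodule.mem_span_singleton_self w₀)
    · rw [Submodule.span_singleton_le_iff_mem]
      exact hw₀W
  rw [hWeq]
  exact finrank_span_singleton hw₀ne

end BP
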